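/- For every pushdown system P = (Q, Γ, A, Δ), every U ⊆ Q, every β ∈ Γ⁺, every γ ∈ RegStr(Γ), and all i, j ∈ ℕ: if eats_β(U) ⊆ U, and rβ^iγ ∼ rβ^jγ for all r ∈ U, and i ≠ j, then rβ^iγ ∼ rβ^jγ ∼ rβ^ω for all r ∈ U. -/

import Mathlib

/-- Stack contents: finite (a list in `Γ*`) or infinite (a stream, used for `αβ^ω`). -/
def SC (Γ : Type) : Type := List Γ ⊕ Stream' Γ

namespace SC

/-- Put one symbol on top of a stack content. -/
def cons {Γ : Type} (X : Γ) : SC Γ → SC Γ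
  | Sum.inl l => Sum.inl (X :: l)
  | Sum.inr s => Sum.inr (Stream'.cons X s)

/-- Put a finite word on top of a stack content. -/
def push {Γ : Type} (γ : List Γ) : SC Γ → SC Γ
  | Sum.inl l => Sum.inl (γ ++ l)
  | Sum.inr s => Sum.inr (Stream'.appendStream' γ s)

end SC

/-- `listPow β i = β^i`, the `i`-fold concatenation of `β`. -/
def listPow {Γ : Type} (β : List Γ) : ℕ → List Γ
  | 0 => []
  | n + 1 => β ++ listPow β n

/-- The infinite stack content `β^ω` (for nonempty `β`). -/
def cycSC {Γ : Type} (β : List Γ) (h : β ≠ []) : SC Γ := Sum.inr (Stream'.cycle β h)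

/-- A pushdown system, given by its (finite) transition relation
`Δ ⊆ Q × Γ × A × Q × Γ*`. -/
structure PDS (Q Γ A : Type) where
  Δ : Finset (Q × Γ × A × Q × List Γ)

namespace PDS

variable {Q Γ A : Type}

/-- The size `|P| = |Q| + |Γ| + |A| + |Δ|` of a pushdown system. -/
def size (P : PDS Q Γ A) [Fintype Q] [Fintype Γ] [Fintype A] : ℕ :=
  Fintype.card Q + Fintype.card Γ + Fintype.card A + P.Δ.card

/-- Push-pop normal form: every transition pushes a word of length at most 2. -/
def PushPop (P : PDS Q Γ A) : Prop := ∀ δ ∈ P.Δ, δ.2.2.2.2.length ≤ 2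

/-- The `a`-labeled step relation on configurations: `pXσ →_a qγσ`. -/
def Step (P : PDS Q Γ A) (a : A) (s t : Q × SC Γ) : Prop :=
  ∃ p X q γ σ, (p, X, a, q, γ) ∈ P.Δ ∧ s = (p, SC.cons X σ) ∧ t = (q, SC.push γ σ)

/-- A step with some label. -/
def StepAny (P : PDS Q Γ A) (s t : Q × SC Γ) : Prop := ∃ a, P.Step a s t

/-- Reachability `→*`. -/
def Reach (P : PDS Q Γ A) : (Q × SC Γ) → (Q × SC Γ) → Prop :=
  Relation.ReflTransGen P.StepAny

/-- `StepN P n s t` : there is a path of length exactly `n` from `s` to `t`. -/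
def StepN (P : PDS Q Γ A) : ℕ → (Q × SC Γ) → (Q × SC Γ) → Prop
  | 0, s, t => s = t
  | n + 1, s, t => ∃ u, P.StepAny s u ∧ StepN P n u t

/-- `R` is a bisimulation. -/
def IsBisim (P : PDS Q Γ A) (R : (Q × SC Γ) → (Q × SC Γ) → Prop) : Prop :=
  ∀ s t, R s t → ∀ a,
    (∀ s', P.Step a s s' → ∃ t', P.Step a t t' ∧ R s' t') ∧
    (∀ t', P.Step a t t' → ∃ s', P.Step a s s' ∧ R s' t')

/-- Bisimilarity `s ∼ t`. -/
def Bisim (P : PDS Q Γ A) (s t : Q × SC Γ) : Prop := ∃ R, P.IsBisim R ∧ R s t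

/-- `eats_α(T) = { r | ∃ q ∈ T, qα →* r }`. -/
def eats (P : PDS Q Γ A) (α : List Γ) (T : Set Q) : Set Q :=
  {r | ∃ q ∈ T, P.Reach (q, Sum.inl α) (r, Sum.inl ([] : List Γ))}

/-- `(α, β)` (with `β` nonempty) is a linked pair if `eats_α = eats_{αβ}`
and `eats_β = eats_{ββ}`. -/
def LinkedPair (P : PDS Q Γ A) (α β : List Γ) : Prop :=
  β ≠ [] ∧ P.eats α = P.eats (α ++ β) ∧ P.eats β = P.eats (β ++ β)

/-- Applying one concrete transition `δ = (p, X, a, q, γ)`. -/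
def TStep (P : PDS Q Γ A) (δ : Q × Γ × A × Q × List Γ) (s t : Q × SC Γ) : Prop :=
  δ ∈ P.Δ ∧ ∃ σ, s = (δ.1, SC.cons δ.2.1 σ) ∧ t = (δ.2.2.2.1, SC.push δ.2.2.2.2 σ)

/-- `RunTo P ρ s t` : applying the sequence of transitions `ρ` starting from `s`
yields `t`. -/
def RunTo (P : PDS Q Γ A) : List (Q × Γ × A × Q × List Γ) → (Q × SC Γ) → (Q × SC Γ) → Prop
  | [], s, t => s = t
  | δ :: ρ, s, t => ∃ u, P.TStep δ s u ∧ RunTo P ρ u t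

/-- Bisimulation classes of configurations reachable from `s₀`
(the states of the bisimulation quotient of `L(P, s₀)`). -/
def classes (P : PDS Q Γ A) (s₀ : Q × SC Γ) : Set (Set (Q × SC Γ)) :=
  {c | ∃ s, P.Reach s₀ s ∧ c = {t | P.Reach s₀ t ∧ P.Bisim s t}}

/-- The `a`-labeled step relation on bisimulation classes. -/
def classStep (P : PDS Q Γ A) (a : A) (c d : Set (Q × SC Γ)) : Prop :=
  ∃ s ∈ c, ∃ t ∈ d, P.Step a s t

end PDS

/-- `StackGrowth` of a single transition: `|γ| − 1`. -/
def tGrowth {Q Γ A : Type} (δ : Q × Γ × A × Q × List Γ) : ℤ := (δ.2.2.2.2.length : ℤ) - 1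

/-- `StackGrowth` of a run. -/
def runGrowth {Q Γ A : Type} (ρ : List (Q × Γ × A × Q × List Γ)) : ℤ := (ρ.map tGrowth).sum

/-- A run is augmenting if every prefix has nonnegative stack growth. -/
def Augmenting {Q Γ A : Type} (ρ : List (Q × Γ × A × Q × List Γ)) : Prop :=
  ∀ i ≤ ρ.length, 0 ≤ runGrowth (ρ.take i)

/-- A digging sequence `(r 0, …, r h)` for `(q, α, β)`. -/
def DiggingSeq {Q Γ A : Type} (P : PDS Q Γ A) (q : Q) (α β : List Γ)
    (h : ℕ) (r : ℕ → Q) : Prop :=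
  r 0 ∈ P.eats α {q} ∧ ∀ d, 1 ≤ d → d ≤ h → r d ∈ P.eats β {r (d - 1)}

/-- A `β^ω`-avoiding digging sequence `(r 0, …, r h)` for `(q, α, β)`,
with respect to the configuration `qαβ^eγ` (where `e ≥ 1`). -/
def Avoiding {Q Γ A : Type} (P : PDS Q Γ A) (q : Q) (α β γ : List Γ) (hβ : β ≠ [])
    (e h : ℕ) (r : ℕ → Q) : Prop :=
  DiggingSeq P q α β h r ∧
  (∃ r' ∈ P.eats β {r 0},
      ¬ P.Bisim (r', Sum.inl (listPow β (e - 1) ++ γ)) (r', cycSC β hβ)) ∧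
  ∀ d, 1 ≤ d → d ≤ h →
    ¬ P.Bisim (r d, Sum.inl (listPow β (e - d) ++ γ)) (r d, cycSC β hβ)

/-- The class of elementary functions `ℕ^k → ℕ`: the smallest class containing
constants, projections, addition, multiplication and exponentiation, and closed
under composition. -/
inductive ElementaryFun : {k : ℕ} → ((Fin k → ℕ) → ℕ) → Prop
  | const {k : ℕ} (c : ℕ) : ElementaryFun (fun _ : Fin k → ℕ => c)
  | proj {k : ℕ} (i : Fin k) : ElementaryFun (fun v : Fin k → ℕ => v i)
  | add : ElementaryFun (fun v : Fin 2 → ℕ => v 0 + v 1)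
  | mul : ElementaryFun (fun v : Fin 2 → ℕ => v 0 * v 1)
  | exp : ElementaryFun (fun v : Fin 2 → ℕ => v 0 ^ v 1)
  | comp {k m : ℕ} (f : (Fin m → ℕ) → ℕ) (g : Fin m → (Fin k → ℕ) → ℕ) :
      ElementaryFun f → (∀ i, ElementaryFun (g i)) →
      ElementaryFun (fun v : Fin k → ℕ => f (fun i => g i v))

/-- A binary function `ℕ² → ℕ` is elementary. -/
def Elementary2 (φ : ℕ → ℕ → ℕ) : Prop :=
  ElementaryFun (fun v : Fin 2 → ℕ => φ (v 0) (v 1))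

/-- A ternary function `ℕ³ → ℕ` is elementary. -/
def Elementary3 (φ : ℕ → ℕ → ℕ → ℕ) : Prop :=
  ElementaryFun (fun v : Fin 3 → ℕ => φ (v 0) (v 1) (v 2))

/-- `prodSeg w i len = w (i+1) * w (i+2) * ⋯ * w (i+len+1)` in a semigroup. -/
def prodSeg {S : Type} [Semigroup S] (w : ℕ → S) (i : ℕ) : ℕ → S
  | 0 => w (i + 1)
  | len + 1 => prodSeg w i len * w (i + len + 2)

/-- `catSeg α i len = α (i+1) ++ α (i+2) ++ ⋯ ++ α (i+len+1)`. -/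
def catSeg {Γ : Type} (α : ℕ → List Γ) (i : ℕ) : ℕ → List Γ
  | 0 => α (i + 1)
  | len + 1 => catSeg α i len ++ α (i + len + 2)

section Aux

variable {Q Γ A : Type}

lemma SC.push_nil (σ : SC Γ) : SC.push ([] : List Γ) σ = σ := by
  cases σ <;> simp [SC.push, Stream'.nil_append_stream] <;> rfl

lemma SC.push_push (a b : List Γ) (σ : SC Γ) :
    SC.push a (SC.push b σ) = SC.push (a ++ b) σ := by
  cases σ <;> simp [SC.push, Stream'.append_append_stream] <;> rfl

lemma SC.push_cons_eq (X : Γ) (l : List Γ) (σ : SC Γ) :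
    SC.push (X :: l) σ = SC.cons X (SC.push l σ) := by
  cases σ <;> simp [SC.push, SC.cons, Stream'.cons_append_stream] <;> rfl

lemma SC.cons_inj {X Y : Γ} {σ τ : SC Γ} (h : SC.cons X σ = SC.cons Y τ) :
    X = Y ∧ σ = τ := by
  cases σ <;> cases τ <;> simp only [SC.cons] at h
  case inl.inl =>
    injection h with h'
    injection h' with h1 h2
    exact ⟨h1, congrArg Sum.inl h2⟩
  case inl.inr => exact absurd h (by simp)
  case inr.inl => exact absurd h (by simp)
  case inr.inr =>
    injection h with h'
    obtain ⟨h1, h2⟩ := Stream'.cons_injective2 h'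
    exact ⟨h1, congrArg Sum.inr h2⟩

lemma listPow_add (β : List Γ) (m n : ℕ) :
    listPow β (m + n) = listPow β m ++ listPow β n := by
  induction m with
  | zero => simp [listPow]
  | succ k ih =>
      have h : k + 1 + n = (k + n) + 1 := by omega
      rw [h]
      show β ++ listPow β (k + n) = (β ++ listPow β k) ++ listPow β n
      rw [ih, List.append_assoc]

lemma pow_append_cycle (β : List Γ) (hβ : β ≠ []) (n : ℕ) :
    Stream'.appendStream' (listPow β n) (Stream'.cycle β hβ) = Stream'.cycle β hβ := by
  induction n with
  | zero => simp [listPow, Stream'.nil_append_stream]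
  | succ k ih =>
      show Stream'.appendStream' (β ++ listPow β k) _ = _
      rw [Stream'.append_append_stream, ih, ← Stream'.cycle_eq]

namespace PDS

variable (P : PDS Q Γ A)

lemma bisim_refl (s : Q × SC Γ) : P.Bisim s s := by
  refine ⟨Eq, ?_, rfl⟩
  intro s t h a; subst h
  exact ⟨fun s' h => ⟨s', h, rfl⟩, fun t' h => ⟨t', h, rfl⟩⟩

lemma bisim_symm {s t : Q × SC Γ} (h : P.Bisim s t) : P.Bisim t s := by
  obtain ⟨R, hR, hst⟩ := h
  refine ⟨fun x y => R y x, ?_, hst⟩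
  intro x y hxy a
  obtain ⟨h1, h2⟩ := hR y x hxy a
  exact ⟨fun s' hs => (h2 s' hs).imp fun t' ⟨ht, hr⟩ => ⟨ht, hr⟩,
         fun t' ht => (h1 t' ht).imp fun s' ⟨hs, hr⟩ => ⟨hs, hr⟩⟩

lemma bisim_trans {s t u : Q × SC Γ} (h1 : P.Bisim s t) (h2 : P.Bisim t u) :
    P.Bisim s u := by
  obtain ⟨R1, hR1, h1⟩ := h1
  obtain ⟨R2, hR2, h2⟩ := h2
  refine ⟨fun x z => ∃ y, R1 x y ∧ R2 y z, ?_, t, h1, h2⟩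
  rintro x z ⟨y, hxy, hyz⟩ a
  obtain ⟨f1, b1⟩ := hR1 x y hxy a
  obtain ⟨f2, b2⟩ := hR2 y z hyz a
  constructor
  · intro s' hs
    obtain ⟨y', hy, hr1⟩ := f1 s' hs
    obtain ⟨z', hz, hr2⟩ := f2 y' hy
    exact ⟨z', hz, y', hr1, hr2⟩
  · intro z' hz
    obtain ⟨y', hy, hr2⟩ := b2 z' hz
    obtain ⟨x', hx, hr1⟩ := b1 y' hy
    exact ⟨x', hx, y', hr1, hr2⟩

lemma bisim_step {s t s' : Q × SC Γ} {a : A} (h : P.Bisim s t) (hs : P.Step a s s') :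
    ∃ t', P.Step a t t' ∧ P.Bisim s' t' := by
  obtain ⟨R, hR, hst⟩ := h
  obtain ⟨f, _⟩ := hR s t hst a
  obtain ⟨t', ht, hr⟩ := f s' hs
  exact ⟨t', ht, R, hR, hr⟩

lemma step_push_intro {q q' : Q} {X : Γ} {a : A} {δ : List Γ}
    (hmem : (q, X, a, q', δ) ∈ P.Δ) (σ' : List Γ) (base : SC Γ) :
    P.Step a (q, SC.push (X :: σ') base) (q', SC.push (δ ++ σ') base) :=
  ⟨q, X, q', δ, SC.push σ' base, hmem, by rw [SC.push_cons_eq], by rw [SC.push_push]⟩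

lemma step_push_elim {q : Q} {X : Γ} {a : A} {σ' : List Γ} {base : SC Γ}
    {w : Q × SC Γ} (h : P.Step a (q, SC.push (X :: σ') base) w) :
    ∃ q' δ, (q, X, a, q', δ) ∈ P.Δ ∧ w = (q', SC.push (δ ++ σ') base) := by
  obtain ⟨p, X0, q', δ, σ0, hmem, heq, hw⟩ := h
  rw [SC.push_cons_eq] at heq
  have hp : q = p := congrArg Prod.fst heq
  have hc : SC.cons X (SC.push σ' base) = SC.cons X0 σ0 := congrArg Prod.snd heq
  obtain ⟨hX, hσ⟩ := SC.cons_inj hc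
  subst hp; subst hX; subst hσ
  exact ⟨q', δ, hmem, by rw [hw, SC.push_push]⟩

lemma reach_from_nil {q : Q} {t : Q × SC Γ}
    (h : P.Reach (q, Sum.inl ([] : List Γ)) t) : t = (q, Sum.inl []) := by
  rcases h.cases_head with h | ⟨u, ⟨a, p, X, q', δ, σ, _, heq, _⟩, _⟩
  · exact h.symm
  · exfalso
    have hc : (Sum.inl ([] : List Γ) : SC Γ) = SC.cons X σ := congrArg Prod.snd heq
    cases σ <;> simp [SC.cons] at hc

lemma reach_split {r : Q} (β' : List Γ) :
    ∀ (s : Q × SC Γ), P.Reach s (r, Sum.inl ([] : List Γ)) →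
    ∀ (q : Q) (σ : List Γ), s = (q, Sum.inl (σ ++ β')) →
      ∃ r', P.Reach (q, Sum.inl σ) (r', Sum.inl ([] : List Γ)) ∧
        P.Reach (r', Sum.inl β') (r, Sum.inl ([] : List Γ)) := by
  intro s hr
  induction hr using Relation.ReflTransGen.head_induction_on with
  | refl =>
      intro q σ hs
      have h1 : r = q := congrArg Prod.fst hs
      have h2 : (Sum.inl ([] : List Γ) : SC Γ) = Sum.inl (σ ++ β') := congrArg Prod.snd hs
      have h3 : σ ++ β' = ([] : List Γ) := (Sum.inl.inj h2).symm
      obtain ⟨hσ, hβ⟩ := List.append_eq_nil_iff.mp h3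
      subst h1; subst hσ; subst hβ
      exact ⟨r, Relation.ReflTransGen.refl, Relation.ReflTransGen.refl⟩
  | head hstep hrest ih =>
      intro q σ hs
      subst hs
      cases σ with
      | nil =>
          refine ⟨q, Relation.ReflTransGen.refl, ?_⟩
          exact Relation.ReflTransGen.head hstep hrest
      | cons X σ' =>
          obtain ⟨a, hstep'⟩ := hstep
          have hps : (Sum.inl (X :: σ' ++ β') : SC Γ) =
              SC.push (X :: (σ' ++ β')) (Sum.inl ([] : List Γ)) := by simp [SC.push]
          rw [hps] at hstep'
          obtain ⟨q', δ, hmem, hw⟩ := P.step_push_elim hstep' 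
          obtain ⟨r', hr1, hr2⟩ := ih q' (δ ++ σ') (by
            rw [hw]; simp [SC.push, List.append_assoc]; rfl)
          refine ⟨r', Relation.ReflTransGen.head ⟨a, ?_⟩ hr1, hr2⟩
          exact ⟨q, X, q', δ, Sum.inl σ', hmem, rfl, rfl⟩

lemma eats_pow {U : Set Q} {β : List Γ} (hU : P.eats β U ⊆ U) :
    ∀ (n : ℕ) (q : Q), q ∈ U → P.eats (listPow β n) {q} ⊆ U := by
  intro n
  induction n with
  | zero =>
      rintro q hq r ⟨q0, hq0, hreach⟩
      have := P.reach_from_nil (by simpa [listPow] using hreach)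
      have hr : r = q0 := congrArg Prod.fst this
      rw [hr]; rwa [Set.mem_singleton_iff.mp hq0]
  | succ k ih =>
      rintro q hq r ⟨q0, hq0, hreach⟩
      rw [Set.mem_singleton_iff.mp hq0] at hreach
      have hreach' : P.Reach (q, Sum.inl (β ++ listPow β k)) (r, Sum.inl ([] : List Γ)) := hreach
      obtain ⟨r', h1, h2⟩ := P.reach_split (listPow β k) _ hreach' q β rfl
      have hr' : r' ∈ U := hU ⟨q, hq, h1⟩
      exact ih r' hr' ⟨r', rfl, h2⟩

end PDS

end Aux

namespace PDS
variable {Q Γ A : Type}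

lemma main_lemma (P : PDS Q Γ A) (U : Set Q) (β : List Γ) (hβ : β ≠ [])
    (γ : SC Γ) (i d : ℕ)
    (hU : P.eats β U ⊆ U)
    (hbis : ∀ r ∈ U, P.Bisim (r, SC.push (listPow β i) γ)
      (r, SC.push (listPow β (i + (d + 1))) γ)) :
    ∀ r ∈ U, P.Bisim (r, SC.push (listPow β i) γ) (r, cycSC β hβ) := by
  classical
  obtain ⟨Y, β₀, hYβ⟩ := List.exists_cons_of_ne_nil hβ
  set cw : SC Γ := cycSC β hβ with hcw
  set bi : SC Γ := SC.push (listPow β i) γ with hbi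
  set e : ℕ := d with he
  have hlist : listPow β (e + 1) = Y :: (β₀ ++ listPow β e) := by
    show β ++ listPow β e = _
    rw [hYβ]; rfl
  have hcyc : SC.push (listPow β (e + 1)) cw = cw := by
    show SC.push _ (Sum.inr _) = _
    simp [hcw, SC.push, cycSC, pow_append_cycle]; rfl
  have hpow : SC.push (listPow β (i + (e + 1))) γ = SC.push (listPow β (e + 1)) bi := by
    rw [hbi, SC.push_push, ← listPow_add, Nat.add_comm]
  refine fun r hr => ⟨fun s t => ∃ q σ, P.eats σ {q} ⊆ U ∧
      P.Bisim s (q, SC.push σ bi) ∧ P.Bisim t (q, SC.push σ cw), ?_, ?_⟩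
  · -- it is a bisimulation
    have norm : ∀ s t, (∃ q σ, P.eats σ {q} ⊆ U ∧ P.Bisim s (q, SC.push σ bi) ∧
          P.Bisim t (q, SC.push σ cw)) →
        ∃ q X σ', P.eats (X :: σ') {q} ⊆ U ∧ P.Bisim s (q, SC.push (X :: σ') bi) ∧
          P.Bisim t (q, SC.push (X :: σ') cw) := by
      rintro s t ⟨q, σ, hsub, h1, h2⟩
      cases σ with
      | cons X σ' => exact ⟨q, X, σ', hsub, h1, h2⟩
      | nil =>
          have hq : q ∈ U := hsub ⟨q, rfl, Relation.ReflTransGen.refl⟩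
          refine ⟨q, Y, β₀ ++ listPow β e, ?_, ?_, ?_⟩
          · rw [← hlist]; exact P.eats_pow hU (e + 1) q hq
          · rw [← hlist, ← hpow]
            rw [SC.push_nil] at h1
            exact P.bisim_trans h1 (hbis q hq)
          · rw [← hlist, hcyc]
            rwa [SC.push_nil] at h2
    intro s t hst a
    obtain ⟨q, X, σ', hsub, h1, h2⟩ := norm s t hst
    have hsub' : ∀ q' δ, (q, X, a, q', δ) ∈ P.Δ → P.eats (δ ++ σ') {q'} ⊆ U := by
      rintro q' δ hmem r0 ⟨q0, hq0, hreach⟩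
      rw [Set.mem_singleton_iff.mp hq0] at hreach
      refine hsub ⟨q, rfl, Relation.ReflTransGen.head ⟨a, ?_⟩ hreach⟩
      exact ⟨q, X, q', δ, Sum.inl σ', hmem, rfl, rfl⟩
    constructor
    · intro s' hs
      obtain ⟨u', hu, hbu⟩ := P.bisim_step h1 hs
      obtain ⟨q', δ, hmem, rfl⟩ := P.step_push_elim hu
      obtain ⟨t', ht, hbt⟩ := P.bisim_step (P.bisim_symm h2) (P.step_push_intro hmem σ' cw)
      exact ⟨t', ht, q', δ ++ σ', hsub' q' δ hmem, hbu, P.bisim_symm hbt⟩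
    · intro t' ht
      obtain ⟨v', hv, hbv⟩ := P.bisim_step h2 ht
      obtain ⟨q', δ, hmem, rfl⟩ := P.step_push_elim hv
      obtain ⟨s', hs, hbs⟩ := P.bisim_step (P.bisim_symm h1) (P.step_push_intro hmem σ' bi)
      exact ⟨s', hs, q', δ ++ σ', hsub' q' δ hmem, P.bisim_symm hbs, hbv⟩
  · refine ⟨r, [], ?_, ?_, ?_⟩
    · rintro r0 ⟨q0, hq0, hreach⟩
      have h0 := P.reach_from_nil hreach
      rw [show r0 = q0 from congrArg Prod.fst h0, Set.mem_singleton_iff.mp hq0]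
      exact hr
    · rw [SC.push_nil]; exact P.bisim_refl _
    · rw [SC.push_nil]; exact P.bisim_refl _

end PDS


/-- If `eats_β(U) ⊆ U`, and `rβ^iγ ∼ rβ^jγ` for all `r ∈ U`, and `i ≠ j`, then
`rβ^iγ ∼ rβ^jγ ∼ rβ^ω` for all `r ∈ U`. -/
theorem stmt_10 (Q Γ A : Type) (P : PDS Q Γ A) (U : Set Q) (β : List Γ) (hβ : β ≠ [])
    (γ : SC Γ) (i j : ℕ)
    (hU : P.eats β U ⊆ U)
    (hbis : ∀ r ∈ U, P.Bisim (r, SC.push (listPow β i) γ) (r, SC.push (listPow β j) γ))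
    (hij : i ≠ j) :
    ∀ r ∈ U,
      P.Bisim (r, SC.push (listPow β i) γ) (r, cycSC β hβ) ∧
      P.Bisim (r, SC.push (listPow β j) γ) (r, cycSC β hβ) := by
  rcases hij.lt_or_gt with h | h
  · have hj' : i + (j - i - 1 + 1) = j := by omega
    have hi := P.main_lemma U β hβ γ i (j - i - 1) hU (by rw [hj']; exact hbis)
    exact fun r hr => ⟨hi r hr,
      P.bisim_trans (P.bisim_symm (hbis r hr)) (hi r hr)⟩
  · have hi' : j + (i - j - 1 + 1) = i := by omega
    have hj := P.main_lemma U β hβ γ j (i - j - 1) hU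
      (by rw [hi']; exact fun r hr => P.bisim_symm (hbis r hr))
    exact fun r hr => ⟨P.bisim_trans (hbis r hr) (hj r hr), hj r hr⟩
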